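/- Let a, b be nonzero real numbers, let t ∈ (0,1), and set s := √(t(1−t)). In M₂(ℂ), let A := [[1,0],[0,0]] and B := [[t,s],[s,1−t]], and let C ∈ M₂(ℂ) be a projection (C* = C, C² = C) such that A commutes with aB + bC. Then C₀₁ = C₁₀ = −(a/b)·s, C₀₀ is real, C₁₁ = 1 − C₀₀, and C₀₀(1 − C₀₀) = (a²/b²)·t(1−t); equivalently C₀₀ = 1/2 + ε·(1/2)√(1 − (4a²/b²)t(1−t)) for some ε ∈ {1, −1}. -/

import Mathlib

/-- for nonzero reals a, b, t ∈ (0,1), s = √(t(1−t)),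
A = [[1,0],[0,0]], B = [[t,s],[s,1−t]] in M₂(ℂ), and a projection C such that A
commutes with aB + bC, the entries of C are determined as stated. -/
theorem stmt16 (a b : ℝ) (ha : a ≠ 0) (hb : b ≠ 0)
    (t : ℝ) (ht : t ∈ Set.Ioo (0 : ℝ) 1)
    (s : ℝ) (hs : s = Real.sqrt (t * (1 - t)))
    (C : Matrix (Fin 2) (Fin 2) ℂ) (hCsa : star C = C) (hCidem : C * C = C)
    (hcomm : Commute (!![1, 0; 0, 0] : Matrix (Fin 2) (Fin 2) ℂ)
      ((a : ℂ) • (!![(t : ℂ), (s : ℂ); (s : ℂ), 1 - (t : ℂ)]) + (b : ℂ) • C)) :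
    C 0 1 = ((-(a / b) * s : ℝ) : ℂ) ∧
    C 1 0 = ((-(a / b) * s : ℝ) : ℂ) ∧
    (C 0 0).im = 0 ∧
    C 1 1 = 1 - C 0 0 ∧
    C 0 0 * (1 - C 0 0) = ((a ^ 2 / b ^ 2 * (t * (1 - t)) : ℝ) : ℂ) ∧
    ∃ ε : ℝ, (ε = 1 ∨ ε = -1) ∧
      C 0 0 = ((1 / 2 + ε * (1 / 2) *
        Real.sqrt (1 - 4 * a ^ 2 / b ^ 2 * (t * (1 - t))) : ℝ) : ℂ) := by
  obtain ⟨ht0, ht1⟩ := ht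
  have htt : 0 < t * (1 - t) := by nlinarith
  have hs2 : s ^ 2 = t * (1 - t) := by rw [hs, sq]; exact Real.mul_self_sqrt htt.le
  have hsne : s ≠ 0 := by rw [hs]; positivity
  have hbC : (b : ℂ) ≠ 0 := by exact_mod_cast hb
  have haC : (a : ℂ) ≠ 0 := by exact_mod_cast ha
  have hsC : (s : ℂ) ≠ 0 := by exact_mod_cast hsne
  have heq := hcomm.eq
  have h01 : (a : ℂ) * s + b * C 0 1 = 0 := by
    have := congrFun (congrFun heq 0) 1
    simpa [Matrix.mul_apply, Fin.sum_univ_succ, Matrix.smul_apply] using this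
  have h10 : (a : ℂ) * s + b * C 1 0 = 0 := by
    have := congrFun (congrFun heq 1) 0
    simpa [Matrix.mul_apply, Fin.sum_univ_succ, Matrix.smul_apply] using this.symm
  have hC01 : C 0 1 = ((-(a / b) * s : ℝ) : ℂ) := by
    push_cast
    field_simp
    linear_combination h01
  have hC10 : C 1 0 = ((-(a / b) * s : ℝ) : ℂ) := by
    push_cast
    field_simp
    linear_combination h10
  have hC01ne : C 0 1 ≠ 0 := by
    rw [hC01]
    simp only [ne_eq, Complex.ofReal_eq_zero]
    intro h
    rcases mul_eq_zero.mp h with h | h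
    · exact ha (by field_simp at h; simpa using h)
    · exact hsne h
  have hre : (C 0 0).im = 0 := by
    have := congrFun (congrFun hCsa 0) 0
    have h := Complex.conj_eq_iff_im.mp (by simpa [Matrix.star_apply] using this)
    exact h
  have hd00 : C 0 0 * C 0 0 + C 0 1 * C 1 0 = C 0 0 := by
    have := congrFun (congrFun hCidem 0) 0
    simpa [Matrix.mul_apply, Fin.sum_univ_succ] using this
  have hd01 : C 0 0 * C 0 1 + C 0 1 * C 1 1 = C 0 1 := by
    have := congrFun (congrFun hCidem 0) 1
    simpa [Matrix.mul_apply, Fin.sum_univ_succ] using this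
  have h11 : C 1 1 = 1 - C 0 0 := by
    have : C 0 1 * (C 0 0 + C 1 1 - 1) = 0 := by ring_nf; linear_combination hd01
    rcases mul_eq_zero.mp this with h | h
    · exact absurd h hC01ne
    · linear_combination h
  have hprod : C 0 0 * (1 - C 0 0) = ((a ^ 2 / b ^ 2 * (t * (1 - t)) : ℝ) : ℂ) := by
    have hs2C : (s : ℂ) ^ 2 = ((t : ℂ)) * (1 - t) := by exact_mod_cast congrArg (Complex.ofReal) hs2
    push_cast
    rw [← hs2C]
    have : C 0 1 * C 1 0 = (a : ℂ) ^ 2 / b ^ 2 * s ^ 2 := by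
      rw [hC01, hC10]; push_cast; field_simp
    linear_combination this - hd00
  refine ⟨hC01, hC10, hre, h11, hprod, ?_⟩
  set x : ℝ := (C 0 0).re with hx
  have hC00 : C 0 0 = (x : ℝ) := Complex.ext rfl hre
  have hxprod : x * (1 - x) = a ^ 2 / b ^ 2 * (t * (1 - t)) := by
    have := hprod
    rw [hC00] at this
    exact_mod_cast this
  have hsq : 1 - 4 * a ^ 2 / b ^ 2 * (t * (1 - t)) = (2 * x - 1) ^ 2 := by linear_combination (4:ℝ)*hxprod
  have habs : Real.sqrt (1 - 4 * a ^ 2 / b ^ 2 * (t * (1 - t))) = |2 * x - 1| := by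
    rw [hsq, Real.sqrt_sq_eq_abs]
  by_cases hxh : 1 / 2 ≤ x
  · refine ⟨1, Or.inl rfl, ?_⟩
    rw [hC00, habs, abs_of_nonneg (by linarith)]
    norm_num
    ring_nf
  · refine ⟨-1, Or.inr rfl, ?_⟩
    rw [hC00, habs, abs_of_neg (by linarith)]
    norm_num
    ring_nf
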